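/- For 1 ≤ k ≤ n and 0 ≤ i ≤ k, in F_q[x_1,…,x_n] one has the recursion c_{k,i} = c_{k−1,i−1}^q + f̃_k · c_{k−1,i}, where by convention c_{k−1,−1} := 0 and c_{k−1,k} := 0. -/

import Mathlib

open MvPolynomial

variable (F : Type) [Field F] [Fintype F] (n : ℕ)

/-- `fP F n k` is the orbit product `f_k` (1-indexed, meaningful for `1 ≤ k ≤ n`)
in `F_q[x_1,…,x_n]`. -/
noncomputable def fP (k : ℕ) : MvPolynomial (Fin n) F :=
  if h : 1 ≤ k ∧ k ≤ n then
    ∏ α : Fin (k - 1) → F,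
      (X (⟨k - 1, by omega⟩ : Fin n) +
        ∑ j : Fin (k - 1), C (α j) * X (⟨j.val, by omega⟩ : Fin n))
  else 0

/-- `cP F n s t` is the Dickson-type invariant `c_{s,t}`:
the sum over strictly increasing sequences `1 ≤ j_1 < ⋯ < j_{s-t} ≤ s` (encoded as
strictly monotone functions `Fin (s-t) → Fin s`) of `∏_l f_{j_l}^{(q-1)·q^{t+l-j_l}}`. -/
noncomputable def cP (s t : ℕ) : MvPolynomial (Fin n) F :=
  if s ≤ n then
    ∑ g ∈ Finset.univ.filter (fun g : Fin (s - t) → Fin s => ∀ a b : Fin (s - t), a < b → g a < g b),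
      ∏ l : Fin (s - t),
        fP F n ((g l).val + 1) ^ ((Fintype.card F - 1) * (Fintype.card F) ^ (t + l.val - (g l).val))
  else 0

/- ### Auxiliary lemmas -/

lemma monoA {m s : ℕ} {g : Fin m → Fin s}
    (hg : ∀ a b : Fin m, a < b → g a < g b) :
    ∀ v (hv : v < m), v ≤ (g ⟨v, hv⟩).val := by
  intro v
  induction v with
  | zero => intro _; exact Nat.zero_le _
  | succ w ih =>
    intro hv
    have h1 := hg ⟨w, by omega⟩ ⟨w + 1, hv⟩ (by simp [Fin.lt_def])
    have h2 := ih (by omega)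
    rw [Fin.lt_def] at h1
    omega

lemma monoB {m s : ℕ} {g : Fin m → Fin s}
    (hg : ∀ a b : Fin m, a < b → g a < g b) (l : Fin m) :
    (g l).val + m ≤ s + l.val := by
  have hg' : ∀ a b : Fin m, a < b → (g a.rev).rev < (g b.rev).rev := by
    intro a b hab
    exact Fin.rev_lt_rev.mpr (hg _ _ (Fin.rev_lt_rev.mpr hab))
  have h1 := monoA hg' l.rev.val l.rev.isLt
  have h2 : (⟨l.rev.val, l.rev.isLt⟩ : Fin m) = l.rev := rfl
  rw [h2] at h1
  rw [Fin.rev_rev] at h1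
  have h3 : l.rev.val = m - 1 - l.val := by
    rw [Fin.val_rev]; omega
  have h4 : ((g l).rev).val = s - 1 - (g l).val := by
    rw [Fin.val_rev]; omega
  have h5 := (g l).isLt
  have h6 := l.isLt
  omega

/-- Splitting a sum over strictly monotone maps `Fin (m+1) → Fin (s+1)` according to
whether the top value `s` is attained. -/
lemma key_split {R : Type*} [CommRing R] (m s : ℕ) (T : ℕ → ℕ → R) :
    ∑ g ∈ Finset.univ.filter
        (fun g : Fin (m+1) → Fin (s+1) => ∀ a b : Fin (m+1), a < b → g a < g b),
        ∏ l : Fin (m+1), T (g l).val l.val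
      = (∑ h ∈ Finset.univ.filter
            (fun h : Fin (m+1) → Fin s => ∀ a b : Fin (m+1), a < b → h a < h b),
          ∏ l : Fin (m+1), T (h l).val l.val)
        + T s m * ∑ h ∈ Finset.univ.filter
            (fun h : Fin m → Fin s => ∀ a b : Fin m, a < b → h a < h b),
            ∏ l : Fin m, T (h l).val l.val := by
  rw [← Finset.sum_filter_add_sum_filter_not
    (Finset.univ.filter
        (fun g : Fin (m+1) → Fin (s+1) => ∀ a b : Fin (m+1), a < b → g a < g b))
    (fun g => g (Fin.last m) ≠ Fin.last s)]
  congr 1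
  · -- top value not attained
    have bound : ∀ (g : Fin (m+1) → Fin (s+1)), (∀ a b : Fin (m+1), a < b → g a < g b) →
        g (Fin.last m) ≠ Fin.last s → ∀ l, (g l).val < s := by
      intro g hg hne l
      have h1 : (g (Fin.last m)).val ≠ s := by
        intro h; exact hne (Fin.ext (by simpa using h))
      have h2 := (g (Fin.last m)).isLt
      have h3 : (g l).val ≤ (g (Fin.last m)).val := by
        by_cases hl : l = Fin.last m
        · rw [hl]
        · have : l < Fin.last m := by
            rw [Fin.lt_def]
            exact lt_of_le_of_ne (Nat.lt_succ_iff.mp l.isLt)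
              (fun h => hl (Fin.ext h))
          exact (Fin.lt_def.mp (hg _ _ this)).le
      omega
    refine Finset.sum_bij'
      (fun g hg => fun l => (⟨(g l).val, by
        simp only [Finset.mem_filter, Finset.mem_univ, true_and] at hg
        exact bound g hg.1 hg.2 l⟩ : Fin s))
      (fun h hh => fun l => (h l).castSucc) ?_ ?_ ?_ ?_ ?_
    · intro g hg
      simp only [Finset.mem_filter, Finset.mem_univ, true_and] at hg ⊢
      intro a b hab
      have := hg.1 a b hab
      rw [Fin.lt_def] at this ⊢
      exact this
    · intro h hh
      simp only [Finset.mem_filter, Finset.mem_univ, true_and] at hh ⊢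
      refine ⟨?_, ?_⟩
      · intro a b hab
        have := hh a b hab
        rw [Fin.lt_def] at this ⊢
        simpa using this
      · intro hcontra
        have := congrArg Fin.val hcontra
        simp [Fin.last] at this
        have := (h (Fin.last m)).isLt
        omega
    · intro g hg; funext l; rfl
    · intro h hh; funext l; rfl
    · intro g hg; rfl
  · -- top value attained
    rw [Finset.mul_sum]
    have bound : ∀ (g : Fin (m+1) → Fin (s+1)), (∀ a b : Fin (m+1), a < b → g a < g b) →
        g (Fin.last m) = Fin.last s → ∀ l : Fin m, (g l.castSucc).val < s := by
      intro g hg htop l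
      have h1 : l.castSucc < Fin.last m := by
        rw [Fin.lt_def]; simpa using l.isLt
      have h2 := hg _ _ h1
      rw [htop, Fin.lt_def] at h2
      simpa using h2
    refine Finset.sum_bij'
      (fun g hg => fun l : Fin m => (⟨(g l.castSucc).val, by
        simp only [Finset.mem_filter, Finset.mem_univ, true_and, not_not] at hg
        exact bound g hg.1 hg.2 l⟩ : Fin s))
      (fun h hh => fun l : Fin (m+1) =>
        if hl : l.val < m then ((h ⟨l.val, hl⟩).castSucc : Fin (s+1)) else Fin.last s) ?_ ?_ ?_ ?_ ?_
    · intro g hg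
      simp only [Finset.mem_filter, Finset.mem_univ, true_and, not_not] at hg ⊢
      intro a b hab
      have hab' : a.castSucc < b.castSucc := by
        rw [Fin.lt_def] at hab ⊢; simpa using hab
      have := hg.1 _ _ hab'
      rw [Fin.lt_def] at this ⊢
      exact this
    · intro h hh
      simp only [Finset.mem_filter, Finset.mem_univ, true_and, not_not] at hh ⊢
      refine ⟨?_, ?_⟩
      · intro a b hab
        rw [Fin.lt_def] at hab
        by_cases hb : b.val < m
        · have ha : a.val < m := by omega
          rw [dif_pos ha, dif_pos hb, Fin.lt_def]
          have := hh ⟨a.val, ha⟩ ⟨b.val, hb⟩ (by rw [Fin.lt_def]; exact hab)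
          rw [Fin.lt_def] at this
          simpa using this
        · have ha : a.val < m := by have := b.isLt; omega
          rw [dif_pos ha, dif_neg hb, Fin.lt_def]
          simpa [Fin.last] using (h ⟨a.val, ha⟩).isLt
      · rw [dif_neg (by simp [Fin.last])]
    · intro g hg
      simp only [Finset.mem_filter, Finset.mem_univ, true_and, not_not] at hg
      funext l
      beta_reduce
      by_cases hl : l.val < m
      · rw [dif_pos hl]
        apply Fin.ext
        simp
      · rw [dif_neg hl]
        have : l = Fin.last m := Fin.ext (by have := l.isLt; simp [Fin.last]; omega)
        rw [this, hg.2]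
    · intro h hh
      funext l
      apply Fin.ext
      have hl : ((l.castSucc : Fin (m+1))).val < m := by simpa using l.isLt
      simp [hl]
    · intro g hg
      simp only [Finset.mem_filter, Finset.mem_univ, true_and, not_not] at hg
      rw [Fin.prod_univ_castSucc]
      simp only [hg.2]
      simp only [Fin.val_last, Fin.coe_castSucc]
      rw [mul_comm]

/-- The recursion `c_{k,i} = c_{k-1,i-1}^q + f̃_k · c_{k-1,i}`, with the conventions
`c_{k-1,-1} := 0` and `c_{k-1,k} := 0`. -/
theorem c_recursion (k i : ℕ) (hk1 : 1 ≤ k) (hk2 : k ≤ n) (hi : i ≤ k) :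
    cP F n k i =
      (if i = 0 then 0 else cP F n (k - 1) (i - 1)) ^ (Fintype.card F) +
        fP F n k ^ (Fintype.card F - 1) * (if i = k then 0 else cP F n (k - 1) i) := by
  have hq1 : 1 ≤ Fintype.card F := Fintype.card_pos
  by_cases hik : i = k
  · -- case i = k
    subst hik
    rw [if_neg (by omega : ¬ i = 0), if_pos rfl, mul_zero, add_zero]
    rw [cP, if_pos hk2, cP, if_pos (by omega : i - 1 ≤ n)]
    rw [Nat.sub_self i, Nat.sub_self (i - 1)]
    rw [Finset.filter_true_of_mem (fun x _ => fun a => a.elim0),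
        Finset.filter_true_of_mem (fun x _ => fun a => a.elim0)]
    simp
  · -- main case i < k
    have hik' : i < k := lt_of_le_of_ne hi hik
    obtain ⟨s', rfl⟩ : ∃ s', k = s' + 1 := ⟨k - 1, by omega⟩
    obtain ⟨m', hm'⟩ : ∃ m', s' + 1 - i = m' + 1 := ⟨s' - i, by omega⟩
    simp only [Nat.add_sub_cancel]
    rw [cP, if_pos hk2, hm',
      key_split m' s'
        (fun v l => fP F n (v + 1) ^ ((Fintype.card F - 1) * (Fintype.card F) ^ (i + l - v)))]
    congr 1
    · -- first summand
      by_cases hi0 : i = 0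
      · rw [if_pos hi0, zero_pow Fintype.card_ne_zero]
        rw [Finset.filter_false_of_mem, Finset.sum_empty]
        intro g _ hg
        have := monoB hg ⟨0, by omega⟩
        simp only at this
        omega
      · rw [if_neg hi0, cP, if_pos (by omega : s' ≤ n),
          (by omega : s' - (i - 1) = m' + 1)]
        obtain ⟨e, hpp, hcard⟩ := FiniteField.card F (ringChar F)
        haveI : Fact (ringChar F).Prime := ⟨hpp⟩
        rw [hcard, sum_pow_char_pow, ← hcard]
        apply Finset.sum_congr rfl
        intro g hg
        simp only [Finset.mem_filter, Finset.mem_univ, true_and] at hg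
        rw [← Finset.prod_pow]
        apply Finset.prod_congr rfl
        intro l _
        rw [← pow_mul]
        congr 1
        have hb := monoB hg l
        have hl := l.isLt
        have hgl := (g l).isLt
        rw [(by omega : i + l.val - (g l).val = ((i - 1) + l.val - (g l).val) + 1),
          pow_succ, mul_assoc]
    · -- second summand
      rw [if_neg (by omega : ¬ i = s' + 1), cP, if_pos (by omega : s' ≤ n),
        (by omega : s' - i = m')]
      congr 1
      rw [(by omega : i + m' - s' = 0), pow_zero, mul_one]
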